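/- Let (x, y, z) : [0, 2π] → ℝ³ be smooth, let γ : [0, 2π] × ℝ → ℝ² be continuously differentiable and 2π-periodic in the second variable with (1/2π)·∫₀^{2π} γ(t, s) ds = (x'(t), z'(t)) for all t ∈ [0, 2π], and let n ≥ 1 be a natural number. Define (a(t), c(t)) := (x(0), z(0)) + ∫₀^{t} γ(u, n·u) du. Then for all t ∈ [0, 2π]: |(a(t), c(t)) − (x(t), z(t))| ≤ (4π/n)·( π·sup |∂ₜγ| + sup |γ| ), where the suprema are over [0, 2π] × ℝ. -/

import Mathlib

open Real Set Function intervalIntegral MeasureTheory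

/-! ### Auxiliary material: vectors in `EuclideanSpace ℝ (Fin 2)` -/

noncomputable def Vpair (a b : ℝ) : EuclideanSpace ℝ (Fin 2) := WithLp.toLp 2 ![a, b]

lemma norm_Vpair (a b : ℝ) : ‖Vpair a b‖ = Real.sqrt (a^2 + b^2) := by
  rw [EuclideanSpace.norm_eq]
  simp [Vpair, Fin.sum_univ_two, Real.norm_eq_abs, sq_abs]

lemma Vpair_decomp (a b : ℝ) : Vpair a b = a • Vpair 1 0 + b • Vpair 0 1 := by
  ext i; fin_cases i <;> simp [Vpair]

lemma Vpair_sub (a b c d : ℝ) : Vpair a b - Vpair c d = Vpair (a-c) (b-d) := by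
  ext i; fin_cases i <;> simp [Vpair]

lemma Vpair_smul (c a b : ℝ) : c • Vpair a b = Vpair (c*a) (c*b) := by
  ext i; fin_cases i <;> simp [Vpair]

lemma IntervalIntegrable.smul_const' {f : ℝ → ℝ} {a b : ℝ}
    (hf : IntervalIntegrable f MeasureTheory.volume a b) (c : EuclideanSpace ℝ (Fin 2)) :
    IntervalIntegrable (fun u => f u • c) MeasureTheory.volume a b :=
  ⟨hf.1.smul_const c, hf.2.smul_const c⟩

lemma integral_Vpair {f g : ℝ → ℝ} {a b : ℝ} (hf : IntervalIntegrable f MeasureTheory.volume a b)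
    (hg : IntervalIntegrable g MeasureTheory.volume a b) :
    ∫ u in a..b, Vpair (f u) (g u) = Vpair (∫ u in a..b, f u) (∫ u in a..b, g u) := by
  rw [show (fun u => Vpair (f u) (g u)) = fun u => f u • Vpair 1 0 + g u • Vpair 0 1 from
      funext fun u => Vpair_decomp _ _,
    integral_add (hf.smul_const' _) (hg.smul_const' _),
    intervalIntegral.integral_smul_const, intervalIntegral.integral_smul_const, ← Vpair_decomp]

/-! ### The estimate over one full period -/

lemma key_full {E : Type*} [NormedAddCommGroup E] [NormedSpace ℝ E] [CompleteSpace E]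
    {T M₁ : ℝ} (hT : 0 < T)
    (Γ : ℝ → ℝ → E) (B : ℝ → E)
    (hΓc : Continuous (uncurry Γ)) (hBc : Continuous B)
    (hper : ∀ u v, Γ u (v + T) = Γ u v)
    (hIB : ∀ u ∈ Icc (0:ℝ) T, ∫ s in (0:ℝ)..T, Γ u s = T • B u)
    (hLip : ∀ v : ℝ, ∀ a ∈ Icc (0:ℝ) T, ∀ u ∈ Icc (0:ℝ) T, ‖Γ u v - Γ a v‖ ≤ M₁ * |u - a|)
    (hBLip : ∀ a ∈ Icc (0:ℝ) T, ∀ u ∈ Icc (0:ℝ) T, ‖B u - B a‖ ≤ M₁ * |u - a|)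
    (n : ℕ) (hn : 1 ≤ n) {a : ℝ} (ha : 0 ≤ a) (hab : a + T / n ≤ T) :
    ‖∫ u in a..(a + T / n), (Γ u (n * u) - B u)‖ ≤ M₁ * (T / n) ^ 2 := by
  have hn0 : (0:ℝ) < n := by exact_mod_cast hn
  have hn' : (n:ℝ) ≠ 0 := ne_of_gt hn0
  set L : ℝ := T / n with hLdef
  have hL : 0 < L := div_pos hT hn0
  set b : ℝ := a + L with hbdef
  have hab' : a ≤ b := by simp [hbdef]; linarith
  have haI : a ∈ Icc (0:ℝ) T := ⟨ha, by linarith⟩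
  have hmem : ∀ u ∈ Icc a b, u ∈ Icc (0:ℝ) T := fun u hu => ⟨by linarith [hu.1], by linarith [hu.2]⟩
  -- continuity facts
  have contΓn : Continuous fun u => Γ u ((n:ℝ) * u) :=
    hΓc.comp (continuous_id.prodMk (continuous_const.mul continuous_id))
  have contΓa : Continuous fun u => Γ a ((n:ℝ) * u) :=
    hΓc.comp (continuous_const.prodMk (continuous_const.mul continuous_id))
  have i1 : IntervalIntegrable (fun u => Γ u ((n:ℝ)*u)) volume a b := contΓn.intervalIntegrable a b
  have i2 : IntervalIntegrable (fun u => Γ a ((n:ℝ)*u)) volume a b := contΓa.intervalIntegrable a b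
  have i3 : IntervalIntegrable B volume a b := hBc.intervalIntegrable a b
  -- the middle term : exact computation
  have e2 : (∫ u in a..b, Γ a ((n:ℝ) * u)) = L • B a := by
    rw [intervalIntegral.integral_comp_mul_left (fun s => Γ a s) hn']
    have hb' : (n:ℝ) * b = (n:ℝ) * a + T := by
      rw [hbdef, hLdef, mul_add, mul_div_cancel₀ _ hn']
    rw [hb']
    have hperA : Function.Periodic (Γ a) T := fun v => hper a v
    rw [hperA.intervalIntegral_add_eq ((n:ℝ)*a) 0, zero_add, hIB a haI, smul_smul,
      inv_mul_eq_div, ← hLdef]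
  -- decomposition
  have split : (∫ u in a..b, (Γ u ((n:ℝ)*u) - B u))
      = (∫ u in a..b, (Γ u ((n:ℝ)*u) - Γ a ((n:ℝ)*u))) + (∫ u in a..b, (B a - B u)) := by
    rw [integral_sub i1 i3, integral_sub i1 i2,
      integral_sub ((continuous_const).intervalIntegrable a b) i3,
      intervalIntegral.integral_const, e2,
      show b - a = L by rw [hbdef]; ring]
    abel
  rw [split]
  have key1 : ∀ (h : ℝ → E), (∀ u ∈ Icc a b, ‖h u‖ ≤ M₁ * (u - a)) →
      IntervalIntegrable (fun u => ‖h u‖) volume a b →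
      IntervalIntegrable h volume a b →
      ‖∫ u in a..b, h u‖ ≤ M₁ * L^2 / 2 := by
    intro h hh hint hint'
    calc ‖∫ u in a..b, h u‖ ≤ ∫ u in a..b, ‖h u‖ :=
          intervalIntegral.norm_integral_le_integral_norm hab'
      _ ≤ ∫ u in a..b, M₁ * (u - a) := by
          apply intervalIntegral.integral_mono_on hab' hint
          · exact ((continuous_const.mul (continuous_id.sub continuous_const)).intervalIntegrable a b)
          · exact hh
      _ = M₁ * L^2 / 2 := by
          rw [intervalIntegral.integral_const_mul]
          rw [intervalIntegral.integral_comp_sub_right (fun u => u) a]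
          rw [integral_id]
          rw [hbdef]
          ring_nf
  have b1 : ‖∫ u in a..b, (Γ u ((n:ℝ)*u) - Γ a ((n:ℝ)*u))‖ ≤ M₁ * L^2 / 2 := by
    apply key1
    · intro u hu
      have := hLip ((n:ℝ)*u) a haI u (hmem u hu)
      rwa [abs_of_nonneg (by linarith [hu.1])] at this
    · exact ((contΓn.sub contΓa).norm).intervalIntegrable a b
    · exact (contΓn.sub contΓa).intervalIntegrable a b
  have b2 : ‖∫ u in a..b, (B a - B u)‖ ≤ M₁ * L^2 / 2 := by
    apply key1
    · intro u hu
      have := hBLip a haI u (hmem u hu)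
      rw [← norm_neg]
      simp only [neg_sub]
      rwa [abs_of_nonneg (by linarith [hu.1])] at this
    · exact ((continuous_const.sub hBc).norm).intervalIntegrable a b
    · exact (continuous_const.sub hBc).intervalIntegrable a b
  calc ‖_ + _‖ ≤ M₁ * L^2/2 + M₁*L^2/2 := norm_add_le_of_le b1 b2
    _ = M₁ * L^2 := by ring

/-! ### The estimate over `[0, t]` -/

lemma key_main {E : Type*} [NormedAddCommGroup E] [NormedSpace ℝ E] [CompleteSpace E]
    {T M₁ M₂ : ℝ} (hT : 0 < T) (hM₁0 : 0 ≤ M₁) (hM₂0 : 0 ≤ M₂)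
    (Γ : ℝ → ℝ → E) (B : ℝ → E)
    (hΓc : Continuous (uncurry Γ)) (hBc : Continuous B)
    (hper : ∀ u v, Γ u (v + T) = Γ u v)
    (hIB : ∀ u ∈ Icc (0:ℝ) T, ∫ s in (0:ℝ)..T, Γ u s = T • B u)
    (hLip : ∀ v : ℝ, ∀ a ∈ Icc (0:ℝ) T, ∀ u ∈ Icc (0:ℝ) T, ‖Γ u v - Γ a v‖ ≤ M₁ * |u - a|)
    (hΓb : ∀ u ∈ Icc (0:ℝ) T, ∀ v, ‖Γ u v‖ ≤ M₂)
    (n : ℕ) (hn : 1 ≤ n) {t : ℝ} (ht : t ∈ Icc (0:ℝ) T) :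
    ‖∫ u in (0:ℝ)..t, (Γ u (n * u) - B u)‖ ≤ n * (M₁ * (T/n)^2) + 2 * M₂ * (T/n) := by
  have hn0 : (0:ℝ) < n := by exact_mod_cast hn
  have hn' : (n:ℝ) ≠ 0 := ne_of_gt hn0
  set L : ℝ := T / n with hLdef
  have hL : 0 < L := div_pos hT hn0
  -- derived facts about B
  have hBb : ∀ u ∈ Icc (0:ℝ) T, ‖B u‖ ≤ M₂ := by
    intro u hu
    have h1 : ‖∫ s in (0:ℝ)..T, Γ u s‖ ≤ M₂ * |T - 0| :=
      intervalIntegral.norm_integral_le_of_norm_le_const fun s _ => hΓb u hu s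
    rw [hIB u hu, norm_smul, Real.norm_of_nonneg hT.le, sub_zero, abs_of_pos hT, mul_comm] at h1
    exact le_of_mul_le_mul_right h1 hT
  have hBLip : ∀ a ∈ Icc (0:ℝ) T, ∀ u ∈ Icc (0:ℝ) T, ‖B u - B a‖ ≤ M₁ * |u - a| := by
    intro a ha u hu
    have hci : ∀ w : ℝ, IntervalIntegrable (fun s => Γ w s) volume 0 T := by
      intro w
      exact (hΓc.comp (continuous_const.prodMk continuous_id)).intervalIntegrable 0 T
    have e : (T:ℝ) • (B u - B a) = ∫ s in (0:ℝ)..T, (Γ u s - Γ a s) := by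
      rw [integral_sub (hci u) (hci a), hIB u hu, hIB a ha, smul_sub]
    have h1 : ‖∫ s in (0:ℝ)..T, (Γ u s - Γ a s)‖ ≤ (M₁ * |u - a|) * |T - 0| :=
      intervalIntegral.norm_integral_le_of_norm_le_const fun s _ => hLip s a ha u hu
    rw [← e, norm_smul, Real.norm_of_nonneg hT.le, sub_zero, abs_of_pos hT, mul_comm] at h1
    exact le_of_mul_le_mul_left (by linarith [h1]) hT
  -- continuity and integrability of the integrand
  have contΓn : Continuous fun u => Γ u ((n:ℝ) * u) :=
    hΓc.comp (continuous_id.prodMk (continuous_const.mul continuous_id))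
  have gc : Continuous fun u => Γ u ((n:ℝ) * u) - B u := contΓn.sub hBc
  have gint : ∀ a b : ℝ, IntervalIntegrable (fun u => Γ u ((n:ℝ)*u) - B u) volume a b :=
    fun a b => gc.intervalIntegrable a b
  set K : ℕ := ⌊t / L⌋₊ with hKdef
  have htL : (0:ℝ) ≤ t / L := div_nonneg ht.1 hL.le
  have hKL : (K:ℝ) * L ≤ t := by
    have h := Nat.floor_le htL
    calc (K:ℝ) * L ≤ (t / L) * L := by nlinarith
      _ = t := div_mul_cancel₀ t (ne_of_gt hL)
  have htK : t ≤ ((K:ℝ) + 1) * L := by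
    have h := (Nat.lt_floor_add_one (t / L)).le
    calc t = (t / L) * L := (div_mul_cancel₀ t (ne_of_gt hL)).symm
      _ ≤ ((K:ℝ) + 1) * L := by nlinarith
  have hKn : (K:ℝ) ≤ n := by
    have h1 : t / L ≤ (n:ℝ) := by
      rw [hLdef, div_div_eq_mul_div, mul_comm, mul_div_assoc]
      have : t / T ≤ 1 := (div_le_one hT).mpr ht.2
      nlinarith
    exact (Nat.floor_le htL).trans h1
  -- splitting
  have hsum : ∑ k ∈ Finset.range K, (∫ u in ((k:ℝ)*L)..(((k:ℕ)+1:ℕ):ℝ)*L, (Γ u ((n:ℝ)*u) - B u))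
      = ∫ u in (((0:ℕ):ℝ)*L)..(((K:ℕ):ℝ)*L), (Γ u ((n:ℝ)*u) - B u) :=
    intervalIntegral.sum_integral_adjacent_intervals (a := fun k => (k:ℝ) * L)
      (fun k _ => gint _ _)
  have hsplit : (∫ u in (0:ℝ)..t, (Γ u ((n:ℝ)*u) - B u))
      = (∑ k ∈ Finset.range K, (∫ u in ((k:ℝ)*L)..(((k:ℕ)+1:ℕ):ℝ)*L, (Γ u ((n:ℝ)*u) - B u)))
        + ∫ u in ((K:ℝ)*L)..t, (Γ u ((n:ℝ)*u) - B u) := by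
    rw [hsum]
    push_cast
    rw [zero_mul]
    exact (intervalIntegral.integral_add_adjacent_intervals (gint _ _) (gint _ _)).symm
  rw [hsplit]
  -- bounding
  have hfull : ∀ k ∈ Finset.range K,
      ‖∫ u in ((k:ℝ)*L)..(((k:ℕ)+1:ℕ):ℝ)*L, (Γ u ((n:ℝ)*u) - B u)‖ ≤ M₁ * L ^ 2 := by
    intro k hk
    have hk' : (k:ℝ) + 1 ≤ K := by exact_mod_cast Finset.mem_range.mp hk
    have h1 : (((k:ℕ)+1:ℕ):ℝ) * L = (k:ℝ) * L + L := by push_cast; ring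
    rw [h1, hLdef]
    refine key_full hT Γ B hΓc hBc hper hIB hLip hBLip n hn (by positivity) ?_
    rw [← hLdef]
    have : ((k:ℝ)+1) * L ≤ (K:ℝ) * L := by nlinarith
    nlinarith [ht.2, hKL]
  have hrest : ‖∫ u in ((K:ℝ)*L)..t, (Γ u ((n:ℝ)*u) - B u)‖ ≤ 2 * M₂ * L := by
    have h1 : ‖∫ u in ((K:ℝ)*L)..t, (Γ u ((n:ℝ)*u) - B u)‖ ≤ (2 * M₂) * |t - (K:ℝ)*L| := by
      apply intervalIntegral.norm_integral_le_of_norm_le_const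
      intro u hu
      rw [Set.uIoc_of_le hKL] at hu
      have huI : u ∈ Icc (0:ℝ) T := ⟨le_trans (by positivity) hu.1.le, le_trans hu.2 ht.2⟩
      calc ‖Γ u ((n:ℝ)*u) - B u‖ ≤ ‖Γ u ((n:ℝ)*u)‖ + ‖B u‖ := norm_sub_le _ _
        _ ≤ M₂ + M₂ := add_le_add (hΓb u huI _) (hBb u huI)
        _ = 2 * M₂ := by ring
    have h2 : |t - (K:ℝ)*L| ≤ L := by
      rw [abs_of_nonneg (by linarith)]
      linarith
    nlinarith
  calc ‖_‖ ≤ ‖∑ k ∈ Finset.range K, (∫ u in ((k:ℝ)*L)..(((k:ℕ)+1:ℕ):ℝ)*L, (Γ u ((n:ℝ)*u) - B u))‖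
        + ‖∫ u in ((K:ℝ)*L)..t, (Γ u ((n:ℝ)*u) - B u)‖ := norm_add_le _ _
    _ ≤ (∑ k ∈ Finset.range K, (M₁ * L ^ 2)) + 2 * M₂ * L :=
        add_le_add ((norm_sum_le _ _).trans (Finset.sum_le_sum hfull)) hrest
    _ = (K:ℝ) * (M₁ * L ^ 2) + 2 * M₂ * L := by
        rw [Finset.sum_const, Finset.card_range, nsmul_eq_mul]
    _ ≤ (n:ℝ) * (M₁ * L ^ 2) + 2 * M₂ * L := by
        nlinarith [mul_nonneg (sub_nonneg.mpr hKn) (mul_nonneg hM₁0 (sq_nonneg L))]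
    _ = n * (M₁ * (T/n)^2) + 2 * M₂ * (T/n) := by rw [hLdef]

/-- If the `C¹` family of loops `γ = (γ₁, γ₂)`, `2π`-periodic in the second variable, has
barycenter `(x'(t), z'(t))`, then the convex-integration primitive
`(a(t), c(t)) = (x(0), z(0)) + ∫₀ᵗ γ(u, nu) du` is uniformly `(4π/n)·(π·sup‖∂ₜγ‖ + sup‖γ‖)`-close
to `(x(t), z(t))` in the Euclidean norm. -/
theorem primitive_uniformly_close
    (x y z : ℝ → ℝ)
    (hx : ContDiff ℝ (⊤ : ℕ∞) x) (hy : ContDiff ℝ (⊤ : ℕ∞) y)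
    (hz : ContDiff ℝ (⊤ : ℕ∞) z)
    (γ₁ γ₂ : ℝ → ℝ → ℝ)
    (h1 : ContDiff ℝ 1 (Function.uncurry γ₁))
    (h2 : ContDiff ℝ 1 (Function.uncurry γ₂))
    (hper1 : ∀ u v : ℝ, γ₁ u (v + 2 * π) = γ₁ u v)
    (hper2 : ∀ u v : ℝ, γ₂ u (v + 2 * π) = γ₂ u v)
    (havg : ∀ t ∈ Icc (0 : ℝ) (2 * π),
      (1 / (2 * π)) * ∫ s in (0 : ℝ)..(2 * π), γ₁ t s = deriv x t ∧
      (1 / (2 * π)) * ∫ s in (0 : ℝ)..(2 * π), γ₂ t s = deriv z t)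
    (n : ℕ) (hn : 1 ≤ n)
    (M₁ M₂ : ℝ)
    (hM₁ : ∀ u ∈ Icc (0 : ℝ) (2 * π), ∀ v : ℝ,
      Real.sqrt ((deriv (fun w => γ₁ w v) u) ^ 2 + (deriv (fun w => γ₂ w v) u) ^ 2) ≤ M₁)
    (hM₂ : ∀ u ∈ Icc (0 : ℝ) (2 * π), ∀ v : ℝ,
      Real.sqrt ((γ₁ u v) ^ 2 + (γ₂ u v) ^ 2) ≤ M₂) :
    ∀ t ∈ Icc (0 : ℝ) (2 * π),
      Real.sqrt
          ((x 0 + (∫ u in (0 : ℝ)..t, γ₁ u (n * u)) - x t) ^ 2 +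
            (z 0 + (∫ u in (0 : ℝ)..t, γ₂ u (n * u)) - z t) ^ 2)
        ≤ 4 * π / n * (π * M₁ + M₂) := by
  intro t ht
  have hπ : (0:ℝ) < π := Real.pi_pos
  have hT : (0:ℝ) < 2 * π := by linarith
  have h0I : (0:ℝ) ∈ Icc (0:ℝ) (2*π) := ⟨le_rfl, by linarith⟩
  have hM₁0 : 0 ≤ M₁ := le_trans (Real.sqrt_nonneg _) (hM₁ 0 h0I 0)
  have hM₂0 : 0 ≤ M₂ := le_trans (Real.sqrt_nonneg _) (hM₂ 0 h0I 0)
  have hn0 : (0:ℝ) < n := by exact_mod_cast hn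
  -- the loop family and its barycenter, as curves in `EuclideanSpace ℝ (Fin 2)`
  set Γ : ℝ → ℝ → EuclideanSpace ℝ (Fin 2) := fun u v => Vpair (γ₁ u v) (γ₂ u v) with hΓdef
  set B : ℝ → EuclideanSpace ℝ (Fin 2) := fun u => Vpair (deriv x u) (deriv z u) with hBdef
  have hΓc : Continuous (uncurry Γ) := by
    have : uncurry Γ = fun p => uncurry γ₁ p • Vpair 1 0 + uncurry γ₂ p • Vpair 0 1 :=
      funext fun p => Vpair_decomp _ _
    rw [this]
    exact (h1.continuous.smul continuous_const).add (h2.continuous.smul continuous_const)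
  have hxd : Continuous (deriv x) := hx.continuous_deriv (by exact_mod_cast le_top)
  have hzd : Continuous (deriv z) := hz.continuous_deriv (by exact_mod_cast le_top)
  have hBc : Continuous B := by
    have : B = fun u => deriv x u • Vpair 1 0 + deriv z u • Vpair 0 1 :=
      funext fun u => Vpair_decomp _ _
    rw [this]
    exact (hxd.smul continuous_const).add (hzd.smul continuous_const)
  have hper : ∀ u v, Γ u (v + 2 * π) = Γ u v := by
    intro u v
    rw [hΓdef]
    simp only [hper1, hper2]
  have hciΓ : ∀ u : ℝ, ∀ a b : ℝ, IntervalIntegrable (fun s => γ₁ u s) volume a b ∧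
      IntervalIntegrable (fun s => γ₂ u s) volume a b := by
    intro u a b
    constructor
    · exact (h1.continuous.comp (continuous_const.prodMk continuous_id)).intervalIntegrable a b
    · exact (h2.continuous.comp (continuous_const.prodMk continuous_id)).intervalIntegrable a b
  have hIB : ∀ u ∈ Icc (0:ℝ) (2*π), ∫ s in (0:ℝ)..(2*π), Γ u s = (2*π) • B u := by
    intro u hu
    rw [hΓdef, integral_Vpair (hciΓ u 0 (2*π)).1 (hciΓ u 0 (2*π)).2, hBdef, Vpair_smul]
    have e1 : ∫ s in (0:ℝ)..(2*π), γ₁ u s = 2 * π * deriv x u := by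
      have := (havg u hu).1
      field_simp at this
      linarith
    have e2 : ∫ s in (0:ℝ)..(2*π), γ₂ u s = 2 * π * deriv z u := by
      have := (havg u hu).2
      field_simp at this
      linarith
    rw [e1, e2]
  -- the Lipschitz estimate in the first variable via the mean value inequality
  have hLip : ∀ v : ℝ, ∀ a ∈ Icc (0:ℝ) (2*π), ∀ u ∈ Icc (0:ℝ) (2*π),
      ‖Γ u v - Γ a v‖ ≤ M₁ * |u - a| := by
    intro v a ha u hu
    have hd1 : ∀ w : ℝ, HasDerivAt (fun w => γ₁ w v) (deriv (fun w => γ₁ w v) w) w := by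
      intro w
      have : DifferentiableAt ℝ (fun w => γ₁ w v) w := by
        have h := ((h1.differentiable one_ne_zero) (w, v)).comp w
          (differentiableAt_id.prodMk (differentiableAt_const v) :
            DifferentiableAt ℝ (fun w : ℝ => (w, v)) w)
        exact h
      exact this.hasDerivAt
    have hd2 : ∀ w : ℝ, HasDerivAt (fun w => γ₂ w v) (deriv (fun w => γ₂ w v) w) w := by
      intro w
      have : DifferentiableAt ℝ (fun w => γ₂ w v) w := by
        have h := ((h2.differentiable one_ne_zero) (w, v)).comp w
          (differentiableAt_id.prodMk (differentiableAt_const v) :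
            DifferentiableAt ℝ (fun w : ℝ => (w, v)) w)
        exact h
      exact this.hasDerivAt
    have hD : ∀ w : ℝ, HasDerivAt (fun w => Γ w v)
        (Vpair (deriv (fun w => γ₁ w v) w) (deriv (fun w => γ₂ w v) w)) w := by
      intro w
      have h := ((hd1 w).smul_const (Vpair 1 0)).add ((hd2 w).smul_const (Vpair 0 1))
      have heq : (fun w => γ₁ w v • Vpair 1 0 + γ₂ w v • Vpair 0 1) = fun w => Γ w v :=
        funext fun w => (Vpair_decomp _ _).symm
      rw [show ((fun y => γ₁ y v • Vpair 1 0) + fun y => γ₂ y v • Vpair 0 1) = fun w => Γ w v from heq, ← Vpair_decomp] at h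
      exact h
    have := Convex.norm_image_sub_le_of_norm_hasDerivWithin_le
      (f := fun w => Γ w v)
      (f' := fun w => Vpair (deriv (fun w => γ₁ w v) w) (deriv (fun w => γ₂ w v) w))
      (fun w _ => (hD w).hasDerivWithinAt)
      (fun w hw => by rw [norm_Vpair]; exact hM₁ w hw v)
      (convex_Icc (0:ℝ) (2*π)) ha hu
    rwa [Real.norm_eq_abs] at this
  have hΓb : ∀ u ∈ Icc (0:ℝ) (2*π), ∀ v : ℝ, ‖Γ u v‖ ≤ M₂ := by
    intro u hu v
    rw [hΓdef]
    rw [norm_Vpair]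
    exact hM₂ u hu v
  -- apply the key estimate
  have hkey := key_main hT hM₁0 hM₂0 Γ B hΓc hBc hper hIB hLip hΓb n hn ht
  -- rewrite the goal as the norm of the integral
  have hxder : ∫ u in (0:ℝ)..t, deriv x u = x t - x 0 :=
    intervalIntegral.integral_deriv_eq_sub
      (fun u _ => (hx.differentiable (by simp)) u) (hxd.intervalIntegrable 0 t)
  have hzder : ∫ u in (0:ℝ)..t, deriv z u = z t - z 0 :=
    intervalIntegral.integral_deriv_eq_sub
      (fun u _ => (hz.differentiable (by simp)) u) (hzd.intervalIntegrable 0 t)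
  have contΓn1 : Continuous fun u => γ₁ u ((n:ℝ) * u) :=
    h1.continuous.comp (continuous_id.prodMk (continuous_const.mul continuous_id))
  have contΓn2 : Continuous fun u => γ₂ u ((n:ℝ) * u) :=
    h2.continuous.comp (continuous_id.prodMk (continuous_const.mul continuous_id))
  have hval : (∫ u in (0:ℝ)..t, (Γ u ((n:ℝ) * u) - B u))
      = Vpair (x 0 + (∫ u in (0:ℝ)..t, γ₁ u ((n:ℝ) * u)) - x t)
          (z 0 + (∫ u in (0:ℝ)..t, γ₂ u ((n:ℝ) * u)) - z t) := by
    have heq : (fun u => Γ u ((n:ℝ) * u) - B u)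
        = fun u => Vpair (γ₁ u ((n:ℝ)*u) - deriv x u) (γ₂ u ((n:ℝ)*u) - deriv z u) :=
      funext fun u => by rw [hΓdef, hBdef, Vpair_sub]
    rw [heq, integral_Vpair (f := fun u => γ₁ u ((n:ℝ)*u) - deriv x u)
        (g := fun u => γ₂ u ((n:ℝ)*u) - deriv z u) ((contΓn1.sub hxd).intervalIntegrable 0 t)
        ((contΓn2.sub hzd).intervalIntegrable 0 t),
      integral_sub (contΓn1.intervalIntegrable 0 t) (hxd.intervalIntegrable 0 t),
      integral_sub (contΓn2.intervalIntegrable 0 t) (hzd.intervalIntegrable 0 t),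
      hxder, hzder,
      show (∫ u in (0:ℝ)..t, γ₁ u ((n:ℝ)*u)) - (x t - x 0)
          = x 0 + (∫ u in (0:ℝ)..t, γ₁ u ((n:ℝ)*u)) - x t by ring,
      show (∫ u in (0:ℝ)..t, γ₂ u ((n:ℝ)*u)) - (z t - z 0)
          = z 0 + (∫ u in (0:ℝ)..t, γ₂ u ((n:ℝ)*u)) - z t by ring]
  rw [hval] at hkey
  rw [← norm_Vpair]
  refine hkey.trans (le_of_eq ?_)
  have hn' : (n:ℝ) ≠ 0 := ne_of_gt hn0
  field_simp
  ring
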